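/- Suppose for each finite binary string σ ∈ 2^{<ω} a finite set C_σ ⊆ ω^ω is given such that σ ⊑ τ implies C_σ ⊆ C_τ, and for α ∈ 2^ω set C_α = ⋃_{n∈ℕ} C_{α↾n}. Then there exists a set 𝕋 ⊆ 2^ω of cardinality 2^{ℵ₀} such that for all distinct α, β ∈ 𝕋 and all f ∈ C_α and g ∈ C_β, the functions α ⊕ f and β ⊕ g are Turing incomparable. -/

import Mathlib

open Cardinal

namespace Muchnik

/-- Oracle partial recursiveness: `f` is partial recursive relative to the oracle `g`. -/
inductive RecursiveIn (g : ℕ → ℕ) : (ℕ →. ℕ) → Prop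
  | oracle : RecursiveIn g ↑g
  | zero : RecursiveIn g (pure 0)
  | succ : RecursiveIn g ↑Nat.succ
  | left : RecursiveIn g ↑fun n : ℕ => n.unpair.1
  | right : RecursiveIn g ↑fun n : ℕ => n.unpair.2
  | pair {f h} : RecursiveIn g f → RecursiveIn g h →
      RecursiveIn g fun n => Nat.pair <$> f n <*> h n
  | comp {f h} : RecursiveIn g f → RecursiveIn g h →
      RecursiveIn g fun n => h n >>= f
  | prec {f h} : RecursiveIn g f → RecursiveIn g h →
      RecursiveIn g (Nat.unpaired fun a n =>
        n.rec (f a) fun y IH => do let i ← IH; h (Nat.pair a (Nat.pair y i)))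
  | rfind {f} : RecursiveIn g f →
      RecursiveIn g fun a => Nat.rfind fun n => (fun m => m = 0) <$> f (Nat.pair a n)

/-- Turing reducibility `f ≤_T g` for elements of Baire space. -/
def TuringLe (f g : ℕ → ℕ) : Prop := RecursiveIn g ↑f

/-- Strict Turing reducibility `f <_T g`. -/
def TuringLt (f g : ℕ → ℕ) : Prop := TuringLe f g ∧ ¬ TuringLe g f

/-- Turing equivalence `f ≡_T g`. -/
def TuringEquiv (f g : ℕ → ℕ) : Prop := TuringLe f g ∧ TuringLe g f

/-- Turing incomparability `f |_T g`. -/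
def TuringIncomp (f g : ℕ → ℕ) : Prop := ¬ TuringLe f g ∧ ¬ TuringLe g f

/-- Muchnik reducibility `A ≤_w B` between mass problems. -/
def MuchnikLe (A B : Set (ℕ → ℕ)) : Prop := ∀ f ∈ B, ∃ g ∈ A, TuringLe g f

/-- Strict Muchnik reducibility `A <_w B`. -/
def MuchnikLt (A B : Set (ℕ → ℕ)) : Prop := MuchnikLe A B ∧ ¬ MuchnikLe B A

/-- Muchnik equivalence `A ≡_w B`. -/
def MuchnikEquiv (A B : Set (ℕ → ℕ)) : Prop := MuchnikLe A B ∧ MuchnikLe B A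

/-- The strict Turing upper cone `C'(f) = {g : f <_T g}`. -/
def cone (f : ℕ → ℕ) : Set (ℕ → ℕ) := {g | TuringLt f g}

/-- The recursive join `f ⊕ g`: `(f ⊕ g)(2x) = f(x)` and `(f ⊕ g)(2x+1) = g(x)`. -/
def join (f g : ℕ → ℕ) : ℕ → ℕ := fun n => if n % 2 = 0 then f (n / 2) else g (n / 2)

/-- The join `A + B` of mass problems. -/
def joinSet (A B : Set (ℕ → ℕ)) : Set (ℕ → ℕ) := {h | ∃ f ∈ A, ∃ g ∈ B, h = join f g}

/-- Identification of `2^ω` with a subset of Baire space. -/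
def ofBool (X : ℕ → Bool) : ℕ → ℕ := fun n => if X n then 1 else 0


inductive Code
  | oracle | zero | succ | left | right
  | pair (a b : Code)
  | comp (a b : Code)
  | prec (a b : Code)
  | rfind (a : Code)

def eval (g : ℕ → ℕ) : Code → ℕ →. ℕ
  | .oracle => ↑g
  | .zero => pure 0
  | .succ => ↑Nat.succ
  | .left => ↑fun n : ℕ => n.unpair.1
  | .right => ↑fun n : ℕ => n.unpair.2
  | .pair a b => fun n => Nat.pair <$> eval g a n <*> eval g b n
  | .comp a b => fun n => eval g b n >>= eval g a
  | .prec a b => Nat.unpaired fun x n =>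
      n.rec (eval g a x) fun y IH => do let i ← IH; eval g b (Nat.pair x (Nat.pair y i))
  | .rfind a => fun x => Nat.rfind fun n => (fun m => m = 0) <$> eval g a (Nat.pair x n)

theorem exists_code {g : ℕ → ℕ} {f : ℕ →. ℕ} (h : RecursiveIn g f) :
    ∃ c : Code, eval g c = f := by
  induction h with
  | oracle => exact ⟨.oracle, rfl⟩
  | zero => exact ⟨.zero, rfl⟩
  | succ => exact ⟨.succ, rfl⟩
  | left => exact ⟨.left, rfl⟩
  | right => exact ⟨.right, rfl⟩
  | pair _ _ ih₁ ih₂ =>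
      obtain ⟨c₁, rfl⟩ := ih₁; obtain ⟨c₂, rfl⟩ := ih₂; exact ⟨.pair c₁ c₂, rfl⟩
  | comp _ _ ih₁ ih₂ =>
      obtain ⟨c₁, rfl⟩ := ih₁; obtain ⟨c₂, rfl⟩ := ih₂; exact ⟨.comp c₁ c₂, rfl⟩
  | prec _ _ ih₁ ih₂ =>
      obtain ⟨c₁, rfl⟩ := ih₁; obtain ⟨c₂, rfl⟩ := ih₂; exact ⟨.prec c₁ c₂, rfl⟩
  | rfind _ ih =>
      obtain ⟨c, rfl⟩ := ih; exact ⟨.rfind c, rfl⟩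

def encodeCode : Code → ℕ
  | .oracle => Nat.pair 0 0
  | .zero => Nat.pair 1 0
  | .succ => Nat.pair 2 0
  | .left => Nat.pair 3 0
  | .right => Nat.pair 4 0
  | .pair a b => Nat.pair 5 (Nat.pair (encodeCode a) (encodeCode b))
  | .comp a b => Nat.pair 6 (Nat.pair (encodeCode a) (encodeCode b))
  | .prec a b => Nat.pair 7 (Nat.pair (encodeCode a) (encodeCode b))
  | .rfind a => Nat.pair 8 (encodeCode a)

theorem encodeCode_inj : Function.Injective encodeCode := by
  intro a
  induction a with
  | pair a b iha ihb =>
      intro c h; cases c <;> simp [encodeCode, Nat.pair_eq_pair] at h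
      obtain ⟨h1, h2⟩ := h; rw [iha h1, ihb h2]
  | comp a b iha ihb =>
      intro c h; cases c <;> simp [encodeCode, Nat.pair_eq_pair] at h
      obtain ⟨h1, h2⟩ := h; rw [iha h1, ihb h2]
  | prec a b iha ihb =>
      intro c h; cases c <;> simp [encodeCode, Nat.pair_eq_pair] at h
      obtain ⟨h1, h2⟩ := h; rw [iha h1, ihb h2]
  | rfind a iha =>
      intro c h; cases c <;> simp [encodeCode, Nat.pair_eq_pair] at h
      rw [iha h]
  | _ => intro c h; cases c <;> simp [encodeCode, Nat.pair_eq_pair] at h <;> rfl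

instance : Nonempty Code := ⟨.zero⟩

noncomputable def codeEnum : ℕ → Code := Function.invFun encodeCode

theorem codeEnum_encode (c : Code) : codeEnum (encodeCode c) = c :=
  Function.leftInverse_invFun encodeCode_inj c

theorem exists_bound {M : ℕ} {P : ℕ → ℕ → Prop}
    (hm : ∀ j k k', k ≤ k' → P j k → P j k')
    (h : ∀ j < M, ∃ k, P j k) : ∃ k, ∀ j < M, P j k := by
  induction M with
  | zero => exact ⟨0, fun j hj => absurd hj (Nat.not_lt_zero j)⟩
  | succ M ih =>
      obtain ⟨k₁, hk₁⟩ := ih fun j hj => h j (Nat.lt_succ_of_lt hj)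
      obtain ⟨k₂, hk₂⟩ := h M (Nat.lt_succ_self M)
      refine ⟨max k₁ k₂, fun j hj => ?_⟩
      rcases Nat.lt_succ_iff_lt_or_eq.mp hj with hj | rfl
      · exact hm _ _ _ (le_max_left _ _) (hk₁ j hj)
      · exact hm _ _ _ (le_max_right _ _) hk₂

theorem mem_pair_seq {p q : Part ℕ} {m : ℕ} :
    m ∈ (Nat.pair <$> p <*> q) ↔ ∃ a ∈ p, ∃ b ∈ q, Nat.pair a b = m := by
  simp [Seq.seq, Part.bind_eq_bind, Part.mem_bind_iff, Part.map_eq_map, Part.mem_map_iff]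

theorem mem_bind' {p : Part ℕ} {f : ℕ → Part ℕ} {m : ℕ} :
    m ∈ (p >>= f) ↔ ∃ a ∈ p, m ∈ f a := by
  rw [Part.bind_eq_bind, Part.mem_bind_iff]

theorem mem_map' {f : ℕ → Bool} {p : Part ℕ} {b : Bool} :
    b ∈ (f <$> p) ↔ ∃ a ∈ p, f a = b := by
  rw [Part.map_eq_map, Part.mem_map_iff]

theorem eval_use {g : ℕ → ℕ} (c : Code) :
    ∀ {n m : ℕ}, m ∈ eval g c n →
      ∃ k, ∀ g' : ℕ → ℕ, (∀ i < k, g' i = g i) → m ∈ eval g' c n := by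
  induction c with
  | oracle =>
      intro n m h
      refine ⟨n + 1, fun g' hg' => ?_⟩
      have : m = g n := Part.mem_some_iff.mp h
      exact Part.mem_some_iff.mpr (this.trans (hg' n (Nat.lt_succ_self n)).symm)
  | zero => exact fun h => ⟨0, fun g' _ => h⟩
  | succ => exact fun h => ⟨0, fun g' _ => h⟩
  | left => exact fun h => ⟨0, fun g' _ => h⟩
  | right => exact fun h => ⟨0, fun g' _ => h⟩
  | pair a b iha ihb =>
      intro n m h
      obtain ⟨v₁, hv₁, v₂, hv₂, rfl⟩ := mem_pair_seq.mp h
      obtain ⟨k₁, hk₁⟩ := iha hv₁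
      obtain ⟨k₂, hk₂⟩ := ihb hv₂
      refine ⟨max k₁ k₂, fun g' hg' => mem_pair_seq.mpr
        ⟨v₁, hk₁ g' fun i hi => hg' i (lt_of_lt_of_le hi (le_max_left _ _)),
         v₂, hk₂ g' fun i hi => hg' i (lt_of_lt_of_le hi (le_max_right _ _)), rfl⟩⟩
  | comp a b iha ihb =>
      intro n m h
      obtain ⟨v, hv, hm⟩ := mem_bind'.mp h
      obtain ⟨k₁, hk₁⟩ := ihb hv
      obtain ⟨k₂, hk₂⟩ := iha hm
      refine ⟨max k₁ k₂, fun g' hg' => mem_bind'.mpr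
        ⟨v, hk₁ g' fun i hi => hg' i (lt_of_lt_of_le hi (le_max_left _ _)),
         hk₂ g' fun i hi => hg' i (lt_of_lt_of_le hi (le_max_right _ _))⟩⟩
  | prec a b iha ihb =>
      intro n m h
      suffices H : ∀ (N x m : ℕ),
          m ∈ (Nat.rec (eval g a x)
            (fun y IH => IH >>= fun i => eval g b (Nat.pair x (Nat.pair y i))) N : Part ℕ) →
          ∃ k, ∀ g' : ℕ → ℕ, (∀ i < k, g' i = g i) →
            m ∈ (Nat.rec (eval g' a x)
              (fun y IH => IH >>= fun i => eval g' b (Nat.pair x (Nat.pair y i))) N : Part ℕ) by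
        exact H n.unpair.2 n.unpair.1 m h
      intro N
      induction N with
      | zero => exact fun x m h => iha h
      | succ N ihN =>
          intro x m h
          obtain ⟨i, hi, hm⟩ := mem_bind'.mp h
          obtain ⟨k₁, hk₁⟩ := ihN x i hi
          obtain ⟨k₂, hk₂⟩ := ihb hm
          refine ⟨max k₁ k₂, fun g' hg' => mem_bind'.mpr
            ⟨i, hk₁ g' fun j hj => hg' j (lt_of_lt_of_le hj (le_max_left _ _)),
              hk₂ g' fun j hj => hg' j (lt_of_lt_of_le hj (le_max_right _ _))⟩⟩
  | rfind a iha =>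
      intro n m h
      obtain ⟨htrue, hmin⟩ := Nat.mem_rfind.mp h
      obtain ⟨v₀, hv₀, hb₀⟩ := mem_map'.mp htrue
      obtain ⟨k₀, hk₀⟩ := iha hv₀
      have hfalse : ∀ j < m, ∃ k, ∀ g' : ℕ → ℕ, (∀ i < k, g' i = g i) →
          false ∈ ((fun v => decide (v = 0)) <$> eval g' a (Nat.pair n j)) := by
        intro j hj
        obtain ⟨v, hv, hb⟩ := mem_map'.mp (hmin hj)
        obtain ⟨k, hk⟩ := iha hv
        exact ⟨k, fun g' hg' => mem_map'.mpr ⟨v, hk g' hg', hb⟩⟩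
      obtain ⟨k₁, hk₁⟩ := exists_bound
        (fun j k k' hkk hP g' hg' => hP g' fun i hi => hg' i (lt_of_lt_of_le hi hkk)) hfalse
      refine ⟨max k₀ k₁, fun g' hg' => ?_⟩
      refine Nat.mem_rfind.mpr ⟨?_, fun {j} hj => ?_⟩
      · exact mem_map'.mpr
          ⟨v₀, hk₀ g' fun i hi => hg' i (lt_of_lt_of_le hi (le_max_left _ _)), hb₀⟩
      · exact hk₁ j hj g' fun i hi => hg' i (lt_of_lt_of_le hi (le_max_right _ _))

/-- `α` extends the finite string `σ`. -/
def Ext (σ : List Bool) (α : ℕ → Bool) : Prop := ∀ (i : ℕ) (h : i < σ.length), σ[i] = α i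

theorem Ext.mono {σ σ' : List Bool} {α : ℕ → Bool} (hp : σ <+: σ') (h : Ext σ' α) :
    Ext σ α := by
  intro i hi
  rw [List.IsPrefix.getElem hp hi]
  exact h i (lt_of_lt_of_le hi hp.length_le)

theorem ext_ofFn (α : ℕ → Bool) (K : ℕ) : Ext (List.ofFn fun i : Fin K => α i) α := by
  intro i hi
  simp at hi ⊢

theorem Ext.eq_ofFn {σ : List Bool} {α : ℕ → Bool} (h : Ext σ α) :
    σ = List.ofFn fun i : Fin σ.length => α i := by
  apply List.ext_getElem (by simp)
  intro i h1 h2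
  simp [h i h1]

theorem ofFn_prefix_ofFn (α : ℕ → Bool) {j K : ℕ} (hj : j ≤ K) :
    (List.ofFn fun i : Fin j => α i) <+: List.ofFn fun i : Fin K => α i := by
  have : (List.ofFn fun i : Fin j => α i) = (List.ofFn fun i : Fin K => α i).take j := by
    apply List.ext_getElem (by simp [hj]) (fun i h1 h2 => ?_)
    simp
  rw [this]
  exact List.take_prefix _ _

theorem Ext.prefix {σ : List Bool} {α : ℕ → Bool} (h : Ext σ α) {K : ℕ} (hK : σ.length ≤ K) :
    σ <+: List.ofFn fun i : Fin K => α i := by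
  rw [h.eq_ofFn]; exact ofFn_prefix_ofFn α hK

theorem join_agree {α α' : ℕ → Bool} (f : ℕ → ℕ) {K : ℕ} (h : ∀ j < K, α j = α' j) :
    ∀ i < K, join (ofBool α) f i = join (ofBool α') f i := by
  intro i hi
  by_cases h2 : i % 2 = 0
  · simp only [join, ofBool, if_pos h2, h (i / 2) (by omega)]
  · simp only [join, if_neg h2]

/-- Key diagonalization step. -/
theorem diag (f g : ℕ → ℕ) (c : Code) (σ τ : List Bool) :
    ∃ σ' τ' : List Bool, σ <+: σ' ∧ τ <+: τ' ∧
      ∀ α β : ℕ → Bool, Ext σ' α → Ext τ' β →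
        ∃ N, eval (join (ofBool α) f) c N ≠ Part.some (join (ofBool β) g N) := by
  set m := τ.length with hm
  by_cases hcase : ∃ α₀ : ℕ → Bool, Ext σ α₀ ∧
      ∃ v, v ∈ eval (join (ofBool α₀) f) c (2 * m)
  · obtain ⟨α₀, hα₀, v, hv⟩ := hcase
    obtain ⟨k, hk⟩ := eval_use c hv
    set K := max σ.length k with hK
    refine ⟨List.ofFn fun i : Fin K => α₀ i, τ ++ [decide (v = 0)],
      hα₀.prefix (le_max_left _ _), ⟨_, rfl⟩, fun α β hα hβ => ⟨2 * m, fun heq => ?_⟩⟩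
    have hαv : v ∈ eval (join (ofBool α) f) c (2 * m) := by
      apply hk
      intro i hi
      have hik : i < K := lt_of_lt_of_le hi (le_max_right _ _)
      refine join_agree f (fun j hj => ?_) i hik
      have := hα j (by simpa using hj)
      simp at this
      exact this.symm
    rw [heq] at hαv
    have hveq : v = join (ofBool β) g (2 * m) := Part.mem_some_iff.mp hαv
    have hβm : β m = decide (v = 0) := by
      have := hβ m (by simp [hm])
      simpa [hm] using this.symm
    have h1 : (2 * m) % 2 = 0 := by omega
    have h2 : 2 * m / 2 = m := by omega
    rw [join, h1, h2] at hveq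
    simp only [if_pos rfl] at hveq
    rw [ofBool, hβm] at hveq
    by_cases hv0 : v = 0 <;> simp [hv0] at hveq <;> omega
  · refine ⟨σ, τ, List.prefix_refl _, List.prefix_refl _,
      fun α β hα hβ => ⟨2 * m, fun heq => ?_⟩⟩
    exact hcase ⟨α, hα, _, by rw [heq]; exact Part.mem_some_iff.mpr rfl⟩

abbrev Level := List Bool → List Bool

def DiagProp (σ τ : List Bool) (f g : ℕ → ℕ) (c : Code) : Prop :=
  ∀ α β : ℕ → Bool, Ext σ α → Ext τ β →
    ∃ N, eval (join (ofBool α) f) c N ≠ Part.some (join (ofBool β) g N)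

theorem DiagProp.mono {σ σ' τ τ' : List Bool} {f g : ℕ → ℕ} {c : Code}
    (hσ : σ <+: σ') (hτ : τ <+: τ') (h : DiagProp σ τ f g c) : DiagProp σ' τ' f g c :=
  fun α β hα hβ => h α β (Ext.mono hσ hα) (Ext.mono hτ hβ)

structure Req where
  s : List Bool
  t : List Bool
  f : ℕ → ℕ
  g : ℕ → ℕ
  c : Code

noncomputable def diagσ (f g : ℕ → ℕ) (c : Code) (σ τ : List Bool) : List Bool :=
  (diag f g c σ τ).choose

noncomputable def diagτ (f g : ℕ → ℕ) (c : Code) (σ τ : List Bool) : List Bool :=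
  (diag f g c σ τ).choose_spec.choose

theorem diag_spec (f g : ℕ → ℕ) (c : Code) (σ τ : List Bool) :
    σ <+: diagσ f g c σ τ ∧ τ <+: diagτ f g c σ τ ∧
      DiagProp (diagσ f g c σ τ) (diagτ f g c σ τ) f g c :=
  (diag f g c σ τ).choose_spec.choose_spec

noncomputable def stepReq (r : Req) (V : Level) : Level :=
  Function.update (Function.update V r.s (diagσ r.f r.g r.c (V r.s) (V r.t)))
    r.t (diagτ r.f r.g r.c (V r.s) (V r.t))

theorem stepReq_ext (r : Req) (V : Level) (u : List Bool) : V u <+: stepReq r V u := by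
  unfold stepReq
  by_cases hu : u = r.t
  · subst hu
    rw [Function.update_self]
    exact (diag_spec r.f r.g r.c (V r.s) (V r.t)).2.1
  · rw [Function.update_of_ne hu]
    by_cases hu' : u = r.s
    · subst hu'
      rw [Function.update_self]
      exact (diag_spec r.f r.g r.c (V r.s) (V r.t)).1
    · rw [Function.update_of_ne hu']

theorem stepReq_diag (r : Req) (V : Level) (hst : r.s ≠ r.t) :
    DiagProp (stepReq r V r.s) (stepReq r V r.t) r.f r.g r.c := by
  unfold stepReq
  rw [Function.update_self, Function.update_of_ne hst, Function.update_self]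
  exact (diag_spec r.f r.g r.c (V r.s) (V r.t)).2.2

noncomputable def processList : List Req → Level → Level
  | [], V => V
  | r :: L, V => processList L (stepReq r V)

theorem processList_ext : ∀ (L : List Req) (V : Level) (u : List Bool),
    V u <+: processList L V u := by
  intro L
  induction L with
  | nil => exact fun V u => List.prefix_refl _
  | cons r L ih =>
      intro V u
      exact (stepReq_ext r V u).trans (ih (stepReq r V) u)

theorem processList_diag : ∀ (L : List Req) (V : Level) (r : Req), r ∈ L → r.s ≠ r.t →
    DiagProp (processList L V r.s) (processList L V r.t) r.f r.g r.c := by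
  intro L
  induction L with
  | nil => intro V r h; exact absurd h List.not_mem_nil
  | cons r₀ L ih =>
      intro V r hr hst
      rcases List.mem_cons.mp hr with rfl | hr
      · exact DiagProp.mono (processList_ext L _ r.s) (processList_ext L _ r.t)
          (stepReq_diag r V hst)
      · exact ih (stepReq r₀ V) r hr hst

def allLists : ℕ → List (List Bool)
  | 0 => [[]]
  | n + 1 => (allLists n).flatMap fun s => [s ++ [false], s ++ [true]]

theorem mem_allLists : ∀ {n : ℕ} {s : List Bool}, s.length = n → s ∈ allLists n := by
  intro n
  induction n with
  | zero => intro s hs; rw [List.length_eq_zero_iff.mp hs]; exact List.mem_singleton.mpr rfl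
  | succ n ih =>
      intro s hs
      have hne : s ≠ [] := by intro h; rw [h] at hs; simp at hs
      have hdrop : s.dropLast.length = n := by
        rw [List.length_dropLast, hs]
        omega
      rw [allLists, List.mem_flatMap]
      refine ⟨s.dropLast, ih hdrop, ?_⟩
      have := List.dropLast_append_getLast hne
      cases hb : s.getLast hne with
      | false => rw [hb] at this; rw [← this]; simp
      | true => rw [hb] at this; rw [← this]; simp

noncomputable def cList (S : Set (ℕ → ℕ)) (h : S.Finite) : List (ℕ → ℕ) :=
  h.toFinset.toList

theorem mem_cList {S : Set (ℕ → ℕ)} (h : S.Finite) {f : ℕ → ℕ} (hf : f ∈ S) :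
    f ∈ cList S h := by
  rw [cList, Finset.mem_toList, Set.Finite.mem_toFinset]
  exact hf

section Construction

variable (C : List Bool → Set (ℕ → ℕ)) (hfin : ∀ σ : List Bool, (C σ).Finite)

noncomputable def reqs (n : ℕ) (V : Level) : List Req :=
  (allLists n).flatMap fun s =>
    (allLists n).flatMap fun t =>
      (cList (C (V s)) (hfin _)).flatMap fun f =>
        (cList (C (V t)) (hfin _)).flatMap fun g =>
          (List.range n).map fun i => ⟨s, t, f, g, codeEnum i⟩

theorem mem_reqs {n : ℕ} {V : Level} {s t : List Bool} {f g : ℕ → ℕ} {c : Code}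
    (hs : s.length = n) (ht : t.length = n) (hf : f ∈ C (V s)) (hg : g ∈ C (V t))
    (hc : encodeCode c < n) : (⟨s, t, f, g, c⟩ : Req) ∈ reqs C hfin n V := by
  rw [reqs]
  simp only [List.mem_flatMap, List.mem_map, List.mem_range]
  exact ⟨s, mem_allLists hs, t, mem_allLists ht, f, mem_cList _ hf, g, mem_cList _ hg,
    encodeCode c, hc, by rw [codeEnum_encode]⟩

noncomputable def split (V : Level) : Level := fun s => V s.dropLast ++ [s.getLastD false]

noncomputable def TLevel : ℕ → Level
  | 0 => fun _ => []
  | n + 1 => processList (reqs C hfin (n + 1) (split (TLevel n))) (split (TLevel n))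

end Construction

def node (α : ℕ → Bool) (n : ℕ) : List Bool := List.ofFn fun i : Fin n => α i

theorem node_succ (α : ℕ → Bool) (n : ℕ) : node α (n + 1) = node α n ++ [α n] := by
  rw [node, List.ofFn_succ']
  simp [node, List.concat_eq_append]

theorem node_length (α : ℕ → Bool) (n : ℕ) : (node α n).length = n := by simp [node]

theorem Ext.node_prefix {σ : List Bool} {α : ℕ → Bool} (h : Ext σ α) {j : ℕ}
    (hj : j ≤ σ.length) : node α j <+: σ := by
  rw [h.eq_ofFn]
  exact ofFn_prefix_ofFn α hj

section Branch

variable (C : List Bool → Set (ℕ → ℕ)) (hfin : ∀ σ : List Bool, (C σ).Finite)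

theorem split_node (x : ℕ → Bool) (n : ℕ) :
    split (TLevel C hfin n) (node x (n + 1)) = TLevel C hfin n (node x n) ++ [x n] := by
  rw [split, node_succ]
  simp

theorem chain_succ (x : ℕ → Bool) (n : ℕ) :
    TLevel C hfin n (node x n) ++ [x n] <+: TLevel C hfin (n + 1) (node x (n + 1)) := by
  rw [show TLevel C hfin (n + 1) = processList (reqs C hfin (n + 1) (split (TLevel C hfin n)))
    (split (TLevel C hfin n)) from rfl, ← split_node]
  exact processList_ext _ _ _

theorem chain (x : ℕ → Bool) {m n : ℕ} (h : m ≤ n) :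
    TLevel C hfin m (node x m) <+: TLevel C hfin n (node x n) := by
  induction n with
  | zero => rw [Nat.le_zero.mp h]
  | succ n ih =>
      by_cases hm : m = n + 1
      · rw [hm]
      · have h' : m ≤ n := by omega
        exact ((ih h').trans
          ((TLevel C hfin n (node x n)).prefix_append [x n])).trans (chain_succ C hfin x n)
  
theorem length_ge (x : ℕ → Bool) (n : ℕ) : n ≤ (TLevel C hfin n (node x n)).length := by
  induction n with
  | zero => exact Nat.zero_le _
  | succ n ih =>
      have h := (chain_succ C hfin x n).length_le
      simp at h
      omega

noncomputable def br (x : ℕ → Bool) : ℕ → Bool :=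
  fun i => (TLevel C hfin (i + 1) (node x (i + 1))).getD i false

theorem ext_br (x : ℕ → Bool) (n : ℕ) : Ext (TLevel C hfin n (node x n)) (br C hfin x) := by
  intro i hi
  have hlen : i < (TLevel C hfin (i + 1) (node x (i + 1))).length :=
    lt_of_lt_of_le (Nat.lt_succ_self i) (length_ge C hfin x (i + 1))
  rw [br, List.getD_eq_getElem _ _ hlen]
  rcases le_total n (i + 1) with h | h
  · exact List.IsPrefix.getElem (chain C hfin x h) hi
  · exact (List.IsPrefix.getElem (chain C hfin x h) hlen).symm

theorem br_pos (x : ℕ → Bool) (n : ℕ) :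
    br C hfin x ((TLevel C hfin n (node x n)).length) = x n := by
  set L := (TLevel C hfin n (node x n)).length with hL
  have h1 : L < (TLevel C hfin n (node x n) ++ [x n]).length := by simp [hL]
  have h2 : L < (TLevel C hfin (n + 1) (node x (n + 1))).length :=
    lt_of_lt_of_le h1 (chain_succ C hfin x n).length_le
  have h3 := ext_br C hfin x (n + 1) L h2
  rw [← h3, ← List.IsPrefix.getElem (chain_succ C hfin x n) h1]
  simp [hL]

theorem br_inj : Function.Injective (br C hfin) := by
  intro x y h
  by_contra hxy
  have hex : ∃ d, x d ≠ y d := by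
    by_contra hc
    push_neg at hc
    exact hxy (funext hc)
  set n := Nat.find hex with hn
  have hagree : ∀ i < n, x i = y i := fun i hi => by
    have := Nat.find_min hex hi
    simpa using this
  have hnode : node x n = node y n := by
    rw [node, node]
    congr 1
    funext i
    exact hagree i i.isLt
  have h1 := br_pos C hfin x n
  have h2 := br_pos C hfin y n
  rw [hnode, h] at h1
  rw [h1] at h2
  exact Nat.find_spec hex h2

theorem main_not_le (hmono : ∀ σ τ : List Bool, σ <+: τ → C σ ⊆ C τ)
    (x y : ℕ → Bool) (hne : ∃ d, x d ≠ y d) (f g : ℕ → ℕ) (j k : ℕ)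
    (hf : f ∈ C (node (br C hfin x) j)) (hg : g ∈ C (node (br C hfin y) k)) :
    ¬ TuringLe (join (ofBool (br C hfin y)) g) (join (ofBool (br C hfin x)) f) := by
  intro hT
  obtain ⟨c, hc⟩ := exists_code hT
  obtain ⟨d, hd⟩ := hne
  set n := max (max j k) (max d (encodeCode c)) with hn
  have hst : node x (n + 1) ≠ node y (n + 1) := by
    intro h
    rw [node, node, List.ofFn_inj] at h
    exact hd (congrFun h ⟨d, by omega⟩)
  have hfmem : f ∈ C (split (TLevel C hfin n) (node x (n + 1))) := by
    rw [split_node]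
    refine hmono _ _ ?_ hf
    refine ((ext_br C hfin x n).node_prefix ?_).trans (List.prefix_append _ _)
    exact le_trans (by omega) (length_ge C hfin x n)
  have hgmem : g ∈ C (split (TLevel C hfin n) (node y (n + 1))) := by
    rw [split_node]
    refine hmono _ _ ?_ hg
    refine ((ext_br C hfin y n).node_prefix ?_).trans (List.prefix_append _ _)
    exact le_trans (by omega) (length_ge C hfin y n)
  have hr := mem_reqs C hfin (V := split (TLevel C hfin n))
    (node_length x (n + 1)) (node_length y (n + 1)) hfmem hgmem
    (show encodeCode c < n + 1 by omega)
  have hdiag : DiagProp (TLevel C hfin (n + 1) (node x (n + 1)))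
      (TLevel C hfin (n + 1) (node y (n + 1))) f g c :=
    processList_diag _ _ _ hr hst
  obtain ⟨N, hN⟩ := hdiag (br C hfin x) (br C hfin y)
    (ext_br C hfin x (n + 1)) (ext_br C hfin y (n + 1))
  exact hN (congrFun hc N)

end Branch

/-- Given finite sets `C σ ⊆ ω^ω` for finite binary strings `σ`, monotone under the prefix
relation, and letting `C_α = ⋃ n, C (α ↾ n)` for `α ∈ 2^ω`, there is a set `𝕋 ⊆ 2^ω` of
cardinality `2 ^ ℵ₀` such that for distinct `α, β ∈ 𝕋` and all `f ∈ C_α`, `g ∈ C_β`,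
the functions `α ⊕ f` and `β ⊕ g` are Turing incomparable. -/
theorem perfect_set_of_incomparable_indices (C : List Bool → Set (ℕ → ℕ))
    (hfin : ∀ σ : List Bool, (C σ).Finite)
    (hmono : ∀ σ τ : List Bool, σ <+: τ → C σ ⊆ C τ) :
    ∃ 𝕋 : Set (ℕ → Bool), #𝕋 = (2 : Cardinal) ^ Cardinal.aleph0 ∧
      ∀ α ∈ 𝕋, ∀ β ∈ 𝕋, α ≠ β →
        ∀ f ∈ ⋃ n : ℕ, C (List.ofFn fun i : Fin n => α i),
        ∀ g ∈ ⋃ n : ℕ, C (List.ofFn fun i : Fin n => β i),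
          TuringIncomp (join (ofBool α) f) (join (ofBool β) g) := by
  refine ⟨Set.range (br C hfin), ?_, ?_⟩
  · rw [Cardinal.mk_range_eq _ (br_inj C hfin), ← Cardinal.power_def,
      Cardinal.mk_bool, Cardinal.mk_nat]
  · rintro α ⟨x, rfl⟩ β ⟨y, rfl⟩ hab f hf g hg
    simp only [Set.mem_iUnion] at hf hg
    obtain ⟨j, hfj⟩ := hf
    obtain ⟨k, hgk⟩ := hg
    have hne : ∃ d, x d ≠ y d := by
      by_contra hc
      push_neg at hc
      exact hab (congrArg (br C hfin) (funext hc))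
    have hne' : ∃ d, y d ≠ x d := by
      obtain ⟨d, hd⟩ := hne
      exact ⟨d, hd.symm⟩
    exact ⟨main_not_le C hfin hmono y x hne' g f k j hgk hfj,
      main_not_le C hfin hmono x y hne f g j k hfj hgk⟩

end Muchnik
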